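/- For every integer p ≥ 1 and every integer k ≥ 1, setting A(k) = k(k+1)···(k+p-1)/p! and a(k) = A(k+1) - A(k) = (k+1)(k+2)···(k+p-1)/(p-1)!, the ratio a(k)^p / A(k)^{p-1} is at most p^{2(p-1)}/(p-1)!. -/

import Mathlib

theorem forward_coefficient_ratio_bound (p k : ℕ) (hp : 1 ≤ p) (hk : 1 ≤ k)
    (A a : ℕ → ℝ)
    (hA : ∀ m, A m = (∏ i ∈ Finset.range p, ((m : ℝ) + i)) / (Nat.factorial p))
    (ha : ∀ m, a m = A (m + 1) - A m)
    (ha' : ∀ m, a m =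
      (∏ i ∈ Finset.range (p - 1), ((m : ℝ) + 1 + i)) / (Nat.factorial (p - 1))) :
    a k ^ p / A k ^ (p - 1) ≤ (p : ℝ) ^ (2 * (p - 1)) / (Nat.factorial (p - 1)) := by
  obtain ⟨q, rfl⟩ : ∃ q, p = q + 1 := ⟨p - 1, by omega⟩
  have hq : q + 1 - 1 = q := rfl
  set P : ℝ := ∏ i ∈ Finset.range q, ((k : ℝ) + 1 + i) with hP
  have hk1 : (1 : ℝ) ≤ (k : ℝ) := by exact_mod_cast hk
  have hkpos : (0 : ℝ) < k := by linarith
  have hPpos : 0 < P := Finset.prod_pos (fun i _ => by positivity)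
  have hQpos : (0 : ℝ) < (Nat.factorial q : ℝ) := by
    exact_mod_cast Nat.factorial_pos q
  have hprod : ∏ i ∈ Finset.range (q + 1), ((k : ℝ) + i) = P * k := by
    rw [Finset.prod_range_succ']
    simp only [Nat.cast_zero, add_zero]
    congr 1
    refine Finset.prod_congr rfl fun i _ => ?_
    push_cast; ring
  have hAk : A k = P * k / (Nat.factorial (q + 1)) := by
    rw [hA, hprod]
  have hak : a k = P / (Nat.factorial q) := by
    rw [ha' k, hq]
  have hfact : (Nat.factorial (q + 1) : ℝ) = (q + 1) * Nat.factorial q := by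
    rw [Nat.factorial_succ]; push_cast; ring
  have key : a k ^ (q + 1) / A k ^ (q + 1 - 1)
      = P * ((q : ℝ) + 1) ^ q / (Nat.factorial q * (k : ℝ) ^ q) := by
    rw [hak, hAk, hq, hfact]
    have hne : P ≠ 0 := ne_of_gt hPpos
    field_simp
    rw [div_pow, div_pow, mul_pow, mul_pow]
    field_simp
    ring
  rw [key, hq]
  have hPle : P ≤ (((q : ℝ) + 1) * k) ^ q := by
    calc P ≤ ∏ _i ∈ Finset.range q, (((q : ℝ) + 1) * k) := by
              refine Finset.prod_le_prod (fun i _ => by positivity) (fun i hi => ?_)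
              have hi' : (i : ℝ) + 1 ≤ q := by
                exact_mod_cast Finset.mem_range.mp hi
              nlinarith
    _ = (((q : ℝ) + 1) * k) ^ q := by rw [Finset.prod_const, Finset.card_range]
  have step : P * ((q : ℝ) + 1) ^ q / (Nat.factorial q * (k : ℝ) ^ q)
      ≤ (((q : ℝ) + 1) * k) ^ q * ((q : ℝ) + 1) ^ q / (Nat.factorial q * (k : ℝ) ^ q) := by
    gcongr
  refine step.trans (le_of_eq ?_)
  have hcast : ((q + 1 : ℕ) : ℝ) = (q : ℝ) + 1 := by push_cast; ring
  rw [hcast, two_mul, pow_add, mul_pow]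
  field_simp
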